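/- For every n ≥ 1, the number of sextuples (a1, b1, a2, b2, a3, b3) of positive integers satisfying a1 + a2 + a3 = n, b1 + b2 + b3 = n, b1 ≤ a1, b1 + b2 ≤ a1 + a2, and (a2 = 1 or b2 = 1) equals the sum of k² for k from 1 to n−2 (this count is 0 when n ≤ 2). -/
import Mathlib


/-- A Dyck word of semilength `n`, as a list of booleans read left to right,
where `true` is an up-step `U` and `false` is a down-step `D`:
exactly `n` of each letter, and every prefix has at least as many `U`'s as `D`'s. -/
def IsDyckWord (n : ℕ) (w : List Bool) : Prop :=
  w.count true = n ∧ w.count false = n ∧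
    ∀ k : ℕ, (w.take k).count false ≤ (w.take k).count true

/-- The number of peaks of a word: positions where a `U` is immediately followed by a `D`. -/
def numPeaks (w : List Bool) : ℕ := (w.zip w.tail).count (true, false)

/-- The word `U^a D^b`. -/
def upDown (a b : ℕ) : List Bool :=
  List.replicate a true ++ List.replicate b false

/-- A permutation `π` of `{0, …, n-1}` contains the pattern `σ` (a permutation of
`{0, …, m-1}`) if some subsequence of values of `π` is in the same relative order as `σ`. -/
def ContainsPattern {n m : ℕ} (π : Equiv.Perm (Fin n)) (σ : Equiv.Perm (Fin m)) : Prop :=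
  ∃ f : Fin m → Fin n, StrictMono f ∧ ∀ a b : Fin m, π (f a) < π (f b) ↔ σ a < σ b

/-- A permutation avoids a pattern if it does not contain it. -/
def AvoidsPattern {n m : ℕ} (π : Equiv.Perm (Fin n)) (σ : Equiv.Perm (Fin m)) : Prop :=
  ¬ ContainsPattern π σ

/-- The pattern 132 (0-indexed: 021). -/
def pat132 : Equiv.Perm (Fin 3) where
  toFun := ![0, 2, 1]
  invFun := ![0, 2, 1]
  left_inv := by intro x; fin_cases x <;> rfl
  right_inv := by intro x; fin_cases x <;> rfl

/-- The pattern 321 (0-indexed: 210). -/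
def pat321 : Equiv.Perm (Fin 3) where
  toFun := ![2, 1, 0]
  invFun := ![2, 1, 0]
  left_inv := by intro x; fin_cases x <;> rfl
  right_inv := by intro x; fin_cases x <;> rfl

/-- The pattern 4321 (0-indexed: 3210). -/
def pat4321 : Equiv.Perm (Fin 4) where
  toFun := ![3, 2, 1, 0]
  invFun := ![3, 2, 1, 0]
  left_inv := by intro x; fin_cases x <;> rfl
  right_inv := by intro x; fin_cases x <;> rfl

/-- The pattern 4231 (0-indexed: 3120). -/
def pat4231 : Equiv.Perm (Fin 4) where
  toFun := ![3, 1, 2, 0]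
  invFun := ![3, 1, 2, 0]
  left_inv := by intro x; fin_cases x <;> rfl
  right_inv := by intro x; fin_cases x <;> rfl

/-- The strictly decreasing pattern `(k+1)k⋯21` of length `k+1`. -/
def patDesc (k : ℕ) : Equiv.Perm (Fin (k+1)) where
  toFun := Fin.rev
  invFun := Fin.rev
  left_inv := Fin.rev_rev
  right_inv := Fin.rev_rev

/-- `w` has exactly three peaks and, in its (unique) decomposition
`U^{a₁}D^{b₁}U^{a₂}D^{b₂}U^{a₃}D^{b₃}` with all exponents positive,
`a₂ = 1` or `b₂ = 1`. -/
def ThreePeakMiddleOne (w : List Bool) : Prop :=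
  numPeaks w = 3 ∧ ∃ a₁ b₁ a₂ b₂ a₃ b₃ : ℕ,
    0 < a₁ ∧ 0 < b₁ ∧ 0 < a₂ ∧ 0 < b₂ ∧ 0 < a₃ ∧ 0 < b₃ ∧
    w = upDown a₁ b₁ ++ upDown a₂ b₂ ++ upDown a₃ b₃ ∧ (a₂ = 1 ∨ b₂ = 1)

/-- `i` is (the position of) a left-to-right minimum of `π`. -/
def IsLtrMin {n : ℕ} (π : Equiv.Perm (Fin n)) (i : Fin n) : Prop :=
  ∀ j : Fin n, j < i → π i < π j

/-- The condition on a sextuple `(a₁, b₁, a₂, b₂, a₃, b₃)` of positive integers: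
`a₁ + a₂ + a₃ = n`, `b₁ + b₂ + b₃ = n`, `b₁ ≤ a₁`, `b₁ + b₂ ≤ a₁ + a₂`, and
(`a₂ = 1` or `b₂ = 1`). -/
def GoodSextuple (n a₁ b₁ a₂ b₂ a₃ b₃ : ℕ) : Prop :=
  0 < a₁ ∧ 0 < b₁ ∧ 0 < a₂ ∧ 0 < b₂ ∧ 0 < a₃ ∧ 0 < b₃ ∧
    a₁ + a₂ + a₃ = n ∧ b₁ + b₂ + b₃ = n ∧
    b₁ ≤ a₁ ∧ b₁ + b₂ ≤ a₁ + a₂ ∧ (a₂ = 1 ∨ b₂ = 1)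

/-- Target finset: triples `⟨k, (x, y)⟩` with `1 ≤ k ≤ n-2`, `x, y ∈ [1, k]`. -/
def sexTarget (n : ℕ) : Finset ((_ : ℕ) × ℕ × ℕ) :=
  (Finset.Icc 1 (n - 2)).sigma fun k => Finset.Icc 1 k ×ˢ Finset.Icc 1 k

/-- Forward map from sextuples to triples. -/
def sexFwd : ℕ × ℕ × ℕ × ℕ × ℕ × ℕ → (_ : ℕ) × ℕ × ℕ :=
  fun x =>
    let (a1, b1, a2, b2, _, b3) := x
    if a2 = 1 then ⟨a1, (b1, b1 + b2 - 1)⟩ else ⟨b3, (a1 + a2 - b1, a1 - b1 + 1)⟩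

/-- Backward map from triples to sextuples. -/
def sexBwd (n : ℕ) : ((_ : ℕ) × ℕ × ℕ) → ℕ × ℕ × ℕ × ℕ × ℕ × ℕ :=
  fun t =>
    let ⟨k, (x, y)⟩ := t
    if x ≤ y then (k, x, 1, y - x + 1, n - 1 - k, n - 1 - y)
    else (n - 2 - k + y, n - 1 - k, x - y + 1, 1, k + 1 - x, k)

lemma sexFwd_mem {n a1 b1 a2 b2 a3 b3 : ℕ}
    (h : GoodSextuple n a1 b1 a2 b2 a3 b3) :
    sexFwd (a1, b1, a2, b2, a3, b3) ∈ sexTarget n := by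
  obtain ⟨h1, h2, h3, h4, h5, h6, h7, h8, h9, h10, h11⟩ := h
  simp only [sexFwd, sexTarget, Finset.mem_sigma, Finset.mem_product, Finset.mem_Icc]
  by_cases ha : a2 = 1 <;> simp only [ha, reduceIte, if_true, if_false] <;> omega

lemma sexBwd_good {n : ℕ} {t : (_ : ℕ) × ℕ × ℕ} (ht : t ∈ sexTarget n) :
    GoodSextuple n (sexBwd n t).1 (sexBwd n t).2.1 (sexBwd n t).2.2.1
      (sexBwd n t).2.2.2.1 (sexBwd n t).2.2.2.2.1 (sexBwd n t).2.2.2.2.2 := by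
  obtain ⟨k, x, y⟩ := t
  simp [sexTarget, Finset.mem_sigma, Finset.mem_product, Finset.mem_Icc] at ht
  simp only [sexBwd, GoodSextuple]
  by_cases hxy : x ≤ y <;> simp only [hxy, reduceIte, if_true, if_false] <;>
    and_intros <;> first | trivial | omega | (left; trivial) | (right; trivial)

lemma sexBwd_sexFwd {n a1 b1 a2 b2 a3 b3 : ℕ}
    (h : GoodSextuple n a1 b1 a2 b2 a3 b3) :
    sexBwd n (sexFwd (a1, b1, a2, b2, a3, b3)) = (a1, b1, a2, b2, a3, b3) := by
  obtain ⟨h1, h2, h3, h4, h5, h6, h7, h8, h9, h10, h11⟩ := h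
  simp only [sexFwd]
  by_cases ha : a2 = 1
  · simp only [ha, reduceIte, if_true, sexBwd]
    have hb : b1 ≤ b1 + b2 - 1 := by omega
    simp only [hb, reduceIte, if_true, Prod.mk.injEq]
    and_intros <;> first | trivial | omega
  · simp only [ha, reduceIte, if_false, sexBwd]
    have hb2 : b2 = 1 := by omega
    have hx : ¬ (a1 + a2 - b1 ≤ a1 - b1 + 1) := by omega
    simp only [hx, reduceIte, if_false, Prod.mk.injEq]
    and_intros <;> first | trivial | omega

lemma sexFwd_sexBwd {n : ℕ} {t : (_ : ℕ) × ℕ × ℕ} (ht : t ∈ sexTarget n) :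
    sexFwd (sexBwd n t) = t := by
  obtain ⟨k, x, y⟩ := t
  simp [sexTarget, Finset.mem_sigma, Finset.mem_product, Finset.mem_Icc] at ht
  simp only [sexBwd]
  by_cases hxy : x ≤ y
  · simp only [hxy, reduceIte, if_true, sexFwd]
    refine Sigma.ext rfl (heq_of_eq ?_)
    simp only [Prod.mk.injEq]
    and_intros <;> first | trivial | omega
  · simp only [hxy, reduceIte, if_false, sexFwd]
    have h2 : x - y + 1 ≠ 1 := by omega
    simp only [h2, reduceIte, if_false]
    refine Sigma.ext rfl (heq_of_eq ?_)
    simp only [Prod.mk.injEq]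
    and_intros <;> first | trivial | omega

/-- For every `n ≥ 1`, the number of sextuples `(a₁, b₁, a₂, b₂, a₃, b₃)` of
positive integers with `a₁ + a₂ + a₃ = n`, `b₁ + b₂ + b₃ = n`, `b₁ ≤ a₁`,
`b₁ + b₂ ≤ a₁ + a₂` and (`a₂ = 1` or `b₂ = 1`) equals `∑_{k=1}^{n-2} k²`. -/
theorem three_peak_sextuple_count (n : ℕ) (hn : 1 ≤ n) :
    Nat.card {x : ℕ × ℕ × ℕ × ℕ × ℕ × ℕ //
        GoodSextuple n x.1 x.2.1 x.2.2.1 x.2.2.2.1 x.2.2.2.2.1 x.2.2.2.2.2} =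
      ∑ k ∈ Finset.Icc 1 (n - 2), k ^ 2 := by
  have e : {x : ℕ × ℕ × ℕ × ℕ × ℕ × ℕ //
      GoodSextuple n x.1 x.2.1 x.2.2.1 x.2.2.2.1 x.2.2.2.2.1 x.2.2.2.2.2} ≃
      {t // t ∈ sexTarget n} :=
    { toFun := fun x => ⟨sexFwd x.1, sexFwd_mem x.2⟩
      invFun := fun t => ⟨sexBwd n t.1, sexBwd_good t.2⟩
      left_inv := fun x => Subtype.ext (sexBwd_sexFwd x.2)
      right_inv := fun t => Subtype.ext (sexFwd_sexBwd t.2) }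
  rw [Nat.card_congr e, Nat.card_eq_finsetCard]
  rw [sexTarget, Finset.card_sigma]
  refine Finset.sum_congr rfl fun k _ => ?_
  rw [Finset.card_product, Nat.card_Icc]
  rw [Nat.add_sub_cancel, sq]
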